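/- In the complementary series with parameter ν ∈ (-1,1)\{0} and ε = 0, the ratio ‖u_{2k}‖²/|D₀(u_{2k})|² equals ((4k+1+ν)/(1+ν)) · ∏_{j=1}^{k} (1 + (4+4ν)/((4j+1+ν)(4j-3-ν))) for all integers k ≥ 0, where ‖u_{2k}‖² = ∏_{j=1}^{2k} (2j-1-ν)/(2j-1+ν) and D₀(u_{2k}) = ∏_{j=1}^{k} β(2j-1) with β(m) = (2m-1-ν)/(2m+1+ν). -/

import Mathlib

lemma aux_cancel (R a b B n d : ℝ) (hB : B ≠ 0) (hn : n ≠ 0) (hd : d ≠ 0) :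
    (R * B ^ 2 * a * b) / (B * (n / d)) ^ 2 = R * a * b * d ^ 2 / n ^ 2 := by
  field_simp

theorem stmt11 (ν : ℝ) (h1 : ν ∈ Set.Ioo (-1 : ℝ) 1) (h2 : ν ≠ 0) (k : ℕ) :
    (∏ j ∈ Finset.Icc 1 (2 * k), (2 * (j : ℝ) - 1 - ν) / (2 * (j : ℝ) - 1 + ν)) /
      (∏ j ∈ Finset.Icc 1 k,
        (2 * (2 * (j : ℝ) - 1) - 1 - ν) / (2 * (2 * (j : ℝ) - 1) + 1 + ν)) ^ 2 =
    ((4 * (k : ℝ) + 1 + ν) / (1 + ν)) *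
      ∏ j ∈ Finset.Icc 1 k, (1 + (4 + 4 * ν) / ((4 * (j : ℝ) + 1 + ν) * (4 * (j : ℝ) - 3 - ν))) := by
  obtain ⟨hl, hr⟩ := h1
  have h4 : (1 + ν) ≠ 0 := by nlinarith
  induction k with
  | zero => simp [div_self h4]
  | succ k ih =>
    have hB : (0:ℝ) < ∏ j ∈ Finset.Icc 1 k,
        (2 * (2 * (j : ℝ) - 1) - 1 - ν) / (2 * (2 * (j : ℝ) - 1) + 1 + ν) := by
      apply Finset.prod_pos
      intro j hj
      have hj1 : (1:ℝ) ≤ (j:ℝ) := by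
        exact_mod_cast (Finset.mem_Icc.mp hj).1
      apply div_pos <;> nlinarith
    have hA := (div_eq_iff (pow_ne_zero 2 hB.ne')).mp ih
    have e1 : 2 * (k+1) = (2*k + 1) + 1 := by ring
    rw [e1, Finset.prod_Icc_succ_top (by omega), Finset.prod_Icc_succ_top (by omega),
        Finset.prod_Icc_succ_top (by omega : 1 ≤ k + 1),
        Finset.prod_Icc_succ_top (by omega : 1 ≤ k + 1), hA]
    push_cast
    set B := ∏ j ∈ Finset.Icc 1 k,
        (2 * (2 * (j : ℝ) - 1) - 1 - ν) / (2 * (2 * (j : ℝ) - 1) + 1 + ν) with hBdef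
    set C := ∏ j ∈ Finset.Icc 1 k,
        (1 + (4 + 4 * ν) / ((4 * (j : ℝ) + 1 + ν) * (4 * (j : ℝ) - 3 - ν))) with hCdef
    clear_value B C
    have hk : (0:ℝ) ≤ (k:ℝ) := Nat.cast_nonneg k
    have hd : (2 * (2 * ((k:ℝ)+1) - 1) + 1 + ν) ≠ 0 := by nlinarith
    have hn : (2 * (2 * ((k:ℝ)+1) - 1) - 1 - ν) ≠ 0 := by nlinarith
    have h2' : (2 * (2*(k:ℝ)+1) - 1 + ν) ≠ 0 := by nlinarith
    have h3 : (2 * ((2*(k:ℝ)+1)+1) - 1 + ν) ≠ 0 := by nlinarith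
    have h5 : (4 * ((k:ℝ)+1) + 1 + ν) ≠ 0 := by nlinarith
    have h6 : (4 * ((k:ℝ)+1) - 3 - ν) ≠ 0 := by nlinarith
    rw [aux_cancel _ _ _ _ _ _ hB.ne' hn hd]
    have h7 : (2 * ((k:ℝ) * 2 + 1) - 1 + ν) ≠ 0 := by nlinarith
    have h8 : (2 * ((k:ℝ) * 2 + 1 + 1) - 1 + ν) ≠ 0 := by nlinarith
    field_simp
    ring
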